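/- With g as defined (multiplicative on squarefree integers, g(p)=0 for p ≤ e², g(p)=⌊p/log p⌋ for p > e²), one has ∑_{q ≤ x} g(q) = O(x² / (log x)²) as x → ∞. -/

import Mathlib

open Real Finset

/-- The multiplicative function `g` supported on squarefree integers with
`g(p) = 0` for primes `p ≤ e²` and `g(p) = ⌊p / log p⌋` for primes `p > e²`. -/
noncomputable def weirdG (q : ℕ) : ℝ :=
  if Squarefree q then
    ∏ p ∈ q.primeFactors,
      (if (p : ℝ) ≤ Real.exp 2 then 0 else (⌊(p : ℝ) / Real.log p⌋ : ℝ))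
  else 0

noncomputable def fP (p : ℕ) : ℝ :=
  if (p : ℝ) ≤ Real.exp 2 then 0 else (⌊(p : ℝ) / Real.log p⌋ : ℝ)

lemma two_lt_log {p : ℕ} (h : ¬ (p : ℝ) ≤ Real.exp 2) : 2 < Real.log p := by
  have hp : (0:ℝ) < p := lt_trans (Real.exp_pos 2) (not_le.1 h)
  exact (Real.lt_log_iff_exp_lt hp).2 (not_le.1 h)

lemma fP_nonneg (p : ℕ) : 0 ≤ fP p := by
  unfold fP
  split_ifs with h
  · exact le_refl _
  · have hp : (0:ℝ) < p := lt_trans (Real.exp_pos 2) (not_le.1 h)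
    have hl : (0:ℝ) < Real.log p := lt_trans two_pos (two_lt_log h)
    have : (0:ℝ) ≤ (p:ℝ) / Real.log p := le_of_lt (div_pos hp hl)
    exact_mod_cast Int.floor_nonneg.2 this

lemma fP_le {p : ℕ} (h : ¬ (p : ℝ) ≤ Real.exp 2) : fP p ≤ (p : ℝ) / Real.log p := by
  unfold fP
  rw [if_neg h]
  exact Int.floor_le _

lemma weirdG_nonneg (q : ℕ) : 0 ≤ weirdG q := by
  unfold weirdG
  split_ifs with h
  · exact Finset.prod_nonneg fun p _ => fP_nonneg p
  · exact le_refl _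

lemma weirdG_one : weirdG 1 = 1 := by
  unfold weirdG
  rw [if_pos squarefree_one]
  simp

lemma weirdG_prime {p : ℕ} (hp : p.Prime) : weirdG p = fP p := by
  unfold weirdG
  rw [if_pos hp.squarefree, hp.primeFactors, Finset.prod_singleton]
  rfl

lemma weirdG_eq_prod {q : ℕ} (hq : Squarefree q) : weirdG q = ∏ p ∈ q.primeFactors, fP p := by
  unfold weirdG; rw [if_pos hq]; rfl

lemma weirdG_le_half {q : ℕ} (hq : 2 ≤ q) : weirdG q ≤ (q : ℝ) / 2 := by
  have hq0 : (0:ℝ) ≤ (q:ℝ)/2 := by positivity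
  by_cases hsf : Squarefree q
  · rw [weirdG_eq_prod hsf]
    have hne : q.primeFactors.Nonempty := Nat.nonempty_primeFactors.2 (by omega)
    have hstep : ∀ p ∈ q.primeFactors, fP p ≤ (p : ℝ) / 2 := by
      intro p hp
      have hpp := Nat.prime_of_mem_primeFactors hp
      by_cases h : (p : ℝ) ≤ Real.exp 2
      · unfold fP; rw [if_pos h]; positivity
      · refine (fP_le h).trans ?_
        have h2 : (2:ℝ) < Real.log p := two_lt_log h
        have hp0 : (0:ℝ) < p := by exact_mod_cast hpp.pos
        exact div_le_div_of_nonneg_left (le_of_lt hp0) two_pos (le_of_lt h2) |>.trans (le_refl _)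
    calc ∏ p ∈ q.primeFactors, fP p ≤ ∏ p ∈ q.primeFactors, ((p:ℝ)/2) :=
          Finset.prod_le_prod (fun p _ => fP_nonneg p) hstep
      _ = (∏ p ∈ q.primeFactors, (p:ℝ)) / 2 ^ q.primeFactors.card := by
          rw [Finset.prod_div_distrib, Finset.prod_const]
      _ ≤ (q:ℝ) / 2 := by
          have hprod : (∏ p ∈ q.primeFactors, (p:ℝ)) = (q:ℝ) := by
            rw [← Nat.cast_prod, Nat.prod_primeFactors_of_squarefree hsf]
          rw [hprod]
          apply div_le_div_of_nonneg_left (by positivity) two_pos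
          have : 1 ≤ q.primeFactors.card := Finset.card_pos.2 hne
          calc (2:ℝ) = 2^1 := by norm_num
            _ ≤ 2 ^ q.primeFactors.card := by
                exact pow_le_pow_right₀ (by norm_num) this
  · unfold weirdG; rw [if_neg hsf]; exact hq0

lemma weirdG_composite_le {q : ℕ} (h2 : 2 ≤ q) :
    weirdG q ≤ fP q.minFac * weirdG (q / q.minFac) := by
  by_cases hsf : Squarefree q
  · set p := q.minFac with hp
    set m := q / p with hm
    have hq1 : q ≠ 1 := by omega
    have hpp : p.Prime := Nat.minFac_prime hq1
    have hdvd : p ∣ q := Nat.minFac_dvd q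
    have hqm : q = p * m := (Nat.mul_div_cancel' hdvd).symm
    have hm0 : m ≠ 0 := by
      intro h; rw [h, mul_zero] at hqm; omega
    have hsm : Squarefree m := hsf.squarefree_of_dvd ⟨p, by rw [hqm]; ring⟩
    have hpm : ¬ p ∣ m := by
      intro hd
      rcases hd with ⟨k, hk⟩
      have : p * p ∣ q := ⟨k, by rw [hqm, hk]; ring⟩
      exact hpp.not_isUnit (hsf p this)
    have hunion : q.primeFactors = {p} ∪ m.primeFactors := by
      rw [hqm, Nat.primeFactors_mul hpp.ne_zero hm0, hpp.primeFactors]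
    have hdisj : Disjoint ({p} : Finset ℕ) m.primeFactors := by
      simp only [Finset.disjoint_singleton_left]
      intro hmem
      exact hpm (Nat.dvd_of_mem_primeFactors hmem)
    rw [weirdG_eq_prod hsf, weirdG_eq_prod hsm, hunion, Finset.prod_union hdisj,
      Finset.prod_singleton]
  · unfold weirdG
    rw [if_neg hsf]
    exact mul_nonneg (fP_nonneg _) (weirdG_nonneg _)

lemma theta_le (t : ℝ) (ht : 0 ≤ t) (F : Finset ℕ) (hF : ∀ p ∈ F, p.Prime)
    (hFt : ∀ p ∈ F, (p : ℝ) ≤ t) :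
    ∑ p ∈ F, Real.log p ≤ Real.log 4 * t := by
  set m := ⌊t⌋₊ with hmdef
  have hsub : F ⊆ (Finset.range (m+1)).filter Nat.Prime := by
    intro p hp
    rw [Finset.mem_filter, Finset.mem_range]
    refine ⟨?_, hF p hp⟩
    have : (p:ℝ) ≤ t := hFt p hp
    have : p ≤ m := Nat.le_floor this
    omega
  have h1 : ∑ p ∈ F, Real.log p ≤ ∑ p ∈ (Finset.range (m+1)).filter Nat.Prime, Real.log p := by
    apply Finset.sum_le_sum_of_subset_of_nonneg hsub
    intro p hp _
    apply Real.log_nonneg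
    have := (Finset.mem_filter.1 hp).2.one_lt
    exact_mod_cast Nat.one_le_iff_ne_zero.2 (by omega)
  have h2 : ∑ p ∈ (Finset.range (m+1)).filter Nat.Prime, Real.log p
      = Real.log (primorial m) := by
    rw [primorial]
    rw [Nat.cast_prod, Real.log_prod]
    intro p hp
    have := (Finset.mem_filter.1 hp).2.pos
    positivity
  have h3 : Real.log (primorial m) ≤ Real.log (4 ^ m) := by
    apply Real.log_le_log (by exact_mod_cast primorial_pos m)
    exact_mod_cast primorial_le_4_pow m
  have h4 : Real.log ((4:ℝ) ^ m) = m * Real.log 4 := by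
    rw [Real.log_pow]
  have h5 : (m : ℝ) ≤ t := Nat.floor_le ht
  have hlog4 : 0 ≤ Real.log 4 := Real.log_nonneg (by norm_num)
  calc ∑ p ∈ F, Real.log p ≤ Real.log ((4:ℝ)^m) := by
        rw [← h2] at h3
        exact h1.trans (by exact_mod_cast h3)
    _ = m * Real.log 4 := h4
    _ ≤ Real.log 4 * t := by nlinarith

lemma logsq_le {a b : ℝ} (ha : 8 ≤ a) (hab : a ≤ b) :
    (Real.log b)^2 ≤ (Real.log a)^2 * (b / a) := by
  have ha0 : (0:ℝ) < a := by linarith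
  have hb0 : (0:ℝ) < b := by linarith
  set A := Real.log a with hA
  set B := Real.log b with hB
  have hA2 : 2 ≤ A := by
    have h8 : Real.log 8 ≤ A := Real.log_le_log (by norm_num) ha
    have : Real.log 8 = 3 * Real.log 2 := by
      rw [show (8:ℝ) = 2^3 by norm_num, Real.log_pow]; push_cast; ring
    nlinarith [Real.log_two_gt_d9]
  have hAB : A ≤ B := Real.log_le_log ha0 hab
  set D := B - A with hD
  have hD0 : 0 ≤ D := by linarith
  have hexp : Real.exp D = b / a := by
    rw [hD, hB, hA, ← Real.log_div (ne_of_gt hb0) (ne_of_gt ha0), Real.exp_log (by positivity)]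
  have h1 : 1 + D / A ≤ Real.exp (D / A) := by
    have := Real.add_one_le_exp (D / A)
    linarith
  have h2 : Real.exp (D / A) ^ 2 ≤ Real.exp D := by
    rw [← Real.exp_nat_mul]
    apply Real.exp_le_exp.2
    push_cast
    have : D / A ≤ D / 2 := div_le_div_of_nonneg_left hD0 two_pos hA2
    linarith
  have hBeq : B = A * (1 + D / A) := by
    field_simp
    ring
  have h3 : B ^ 2 ≤ A^2 * Real.exp (D/A)^2 := by
    rw [hBeq]
    have h1' : 0 ≤ 1 + D / A := by positivity
    have := mul_le_mul_of_nonneg_left h1 (by linarith : (0:ℝ) ≤ A)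
    nlinarith [Real.exp_pos (D/A)]
  calc B^2 ≤ A^2 * Real.exp (D/A)^2 := h3
    _ ≤ A^2 * Real.exp D := by nlinarith
    _ = A^2 * (b/a) := by rw [hexp]

lemma mono1 {a b : ℝ} (ha : 8 ≤ a) (hab : a ≤ b) :
    a / (Real.log a)^2 ≤ b / (Real.log b)^2 := by
  have ha0 : (0:ℝ) < a := by linarith
  have hb0 : (0:ℝ) < b := by linarith
  have hA : (0:ℝ) < Real.log a := Real.log_pos (by linarith)
  have hB : (0:ℝ) < Real.log b := Real.log_pos (by linarith)
  rw [div_le_div_iff₀ (by positivity) (by positivity)]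
  have := logsq_le ha hab
  calc a * Real.log b ^ 2 ≤ a * ((Real.log a)^2 * (b/a)) := by nlinarith
    _ = b * Real.log a ^ 2 := by field_simp

lemma mono2 {a b : ℝ} (ha : 8 ≤ a) (hab : a ≤ b) :
    a^2 / (Real.log a)^2 ≤ b^2 / (Real.log b)^2 := by
  have ha0 : (0:ℝ) < a := by linarith
  have hb0 : (0:ℝ) < b := by linarith
  have hA : (0:ℝ) < Real.log a := Real.log_pos (by linarith)
  have hB : (0:ℝ) < Real.log b := Real.log_pos (by linarith)
  rw [div_le_div_iff₀ (by positivity) (by positivity)]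
  have hls := logsq_le ha hab
  have hba : 1 ≤ b / a := (one_le_div ha0).2 hab
  calc a^2 * Real.log b ^ 2 ≤ a^2 * ((Real.log a)^2 * (b/a)) := by nlinarith
    _ ≤ a^2 * ((Real.log a)^2 * (b/a)^2) := by
        have h1 : Real.log a ^2 * (b/a) ≤ Real.log a ^2 * (b/a)^2 := by
          have := mul_le_mul_of_nonneg_left hba (by positivity : (0:ℝ) ≤ (Real.log a)^2 * (b/a))
          nlinarith
        nlinarith [sq_nonneg a]
    _ = b^2 * Real.log a ^ 2 := by field_simp

lemma phi_step {a b : ℝ} (ha : 2 ≤ a) (hab : a ≤ b) :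
    a * (1/(a * (Real.log a)^2) - 1/(b * (Real.log b)^2))
      ≤ (1/Real.log a + 1/(Real.log a)^2) - (1/Real.log b + 1/(Real.log b)^2) := by
  have ha0 : (0:ℝ) < a := by linarith
  have hb0 : (0:ℝ) < b := by linarith
  set A := Real.log a with hA
  set B := Real.log b with hB
  have hA0 : (0:ℝ) < A := Real.log_pos (by linarith)
  have hAB : A ≤ B := Real.log_le_log ha0 hab
  have hB0 : (0:ℝ) < B := by linarith
  have hab' : a / b = Real.exp (A - B) := by
    rw [hA, hB, ← Real.log_div (ne_of_gt ha0) (ne_of_gt hb0), Real.exp_log (by positivity)]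
  have hexp : 1 + (A - B) ≤ a / b := by
    rw [hab']
    have := Real.add_one_le_exp (A - B)
    linarith
  -- key : B + 1 - B^2/A ≤ a/b
  have hkey : B + 1 - B^2/A ≤ a / b := by
    have hident : B + 1 - B^2/A = 1 + (A - B) - (B - A)^2/A := by field_simp; ring
    have : 0 ≤ (B - A)^2 / A := by positivity
    linarith
  -- divide by B^2
  have hgoal2 : 1/B + 1/B^2 - 1/A ≤ (a/b)/B^2 := by
    have hd := div_le_div_of_nonneg_right (c := B^2) hkey (by positivity)
    calc 1/B + 1/B^2 - 1/A = (B + 1 - B^2/A)/B^2 := by field_simp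
      _ ≤ (a/b)/B^2 := hd
  have e1 : a * (1/(a * A^2)) = 1/A^2 := by field_simp
  have e2 : a * (1/(b * B^2)) = (a/b)/B^2 := by field_simp
  have expand : a * (1/(a * A^2) - 1/(b * B^2)) = 1/A^2 - (a/b)/B^2 := by
    rw [mul_sub, e1, e2]
  rw [expand]
  linarith

noncomputable def hfun (x : ℝ) : ℝ := 1 / (x * (Real.log x)^2)

lemma hfun_antitone {a b : ℝ} (ha : 2 ≤ a) (hab : a ≤ b) : hfun b ≤ hfun a := by
  unfold hfun
  have hA : (0:ℝ) < Real.log a := Real.log_pos (by linarith)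
  have hB : (0:ℝ) < Real.log b := Real.log_pos (by linarith)
  have hAB : Real.log a ≤ Real.log b := Real.log_le_log (by linarith) hab
  apply one_div_le_one_div_of_le (by positivity)
  have h1 : Real.log a ^ 2 ≤ Real.log b ^ 2 := by nlinarith
  nlinarith

lemma hfun_nonneg {a : ℝ} (ha : 2 ≤ a) : 0 ≤ hfun a := by
  unfold hfun
  have hA : (0:ℝ) < Real.log a := Real.log_pos (by linarith)
  positivity

lemma inv_lemma (P : ℝ) (hP : 3 ≤ P) (F : Finset ℕ)
    (hmem : ∀ p ∈ F, p.Prime ∧ P < (p:ℝ)) (hne : F.Nonempty) :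
    ∑ p ∈ F, 1/((p:ℝ) * Real.log p)
      ≤ (∑ p ∈ F, Real.log p) * hfun (F.max' hne)
        + Real.log 4 * ((1/Real.log P + 1/(Real.log P)^2)
            - (1/Real.log ((F.max' hne : ℕ):ℝ) + 1/(Real.log ((F.max' hne : ℕ):ℝ))^2)) := by
  induction F using Finset.induction_on_max with
  | empty => exact absurd hne (by simp)
  | insert a s hs ih =>
    have has : a ∉ s := fun h => lt_irrefl a (hs a h)
    have hmax : (insert a s).max' ⟨a, mem_insert_self a s⟩ = a := by
      apply le_antisymm
      · apply Finset.max'_le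
        intro y hy
        rcases Finset.mem_insert.1 hy with rfl | hy
        · exact le_refl _
        · exact le_of_lt (hs y hy)
      · exact Finset.le_max' _ a (mem_insert_self a s)
    have hamem := hmem a (mem_insert_self a s)
    have haP : P < (a:ℝ) := hamem.2
    have ha3 : (3:ℝ) ≤ a := le_trans hP (le_of_lt haP)
    have hlogP : (0:ℝ) < Real.log P := Real.log_pos (by linarith)
    have hloga : (0:ℝ) < Real.log a := Real.log_pos (by linarith)
    have hlogPa : Real.log P ≤ Real.log a := Real.log_le_log (by linarith) (le_of_lt haP)
    have ha0 : (0:ℝ) < a := by linarith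
    have hsum : ∑ p ∈ insert a s, 1/((p:ℝ) * Real.log p)
        = 1/((a:ℝ)*Real.log a) + ∑ p ∈ s, 1/((p:ℝ) * Real.log p) :=
      Finset.sum_insert has
    have hth : ∑ p ∈ insert a s, Real.log p
        = Real.log a + ∑ p ∈ s, Real.log p := Finset.sum_insert has
    have hterm : 1/((a:ℝ)*Real.log a) = Real.log a * hfun a := by
      unfold hfun
      field_simp
    simp only [hmax]
    rcases s.eq_empty_or_nonempty with rfl | hsne
    · simp only [Finset.sum_insert (Finset.notMem_empty a), Finset.sum_empty]
      rw [add_zero, add_zero]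
      have hGmono : 0 ≤ (1/Real.log P + 1/(Real.log P)^2)
          - (1/Real.log a + 1/(Real.log a)^2) := by
        have h1 : 1/Real.log a ≤ 1/Real.log P := one_div_le_one_div_of_le hlogP hlogPa
        have h2 : 1/(Real.log a)^2 ≤ 1/(Real.log P)^2 := by
          apply one_div_le_one_div_of_le (by positivity)
          nlinarith
        linarith
      have hlog4 : 0 ≤ Real.log 4 := Real.log_nonneg (by norm_num)
      rw [hterm]
      nlinarith
    · have hmem' : ∀ p ∈ s, p.Prime ∧ P < (p:ℝ) := fun p hp => hmem p (mem_insert_of_mem hp)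
      have IH := ih hmem' hsne
      set M := s.max' hsne with hM
      have hMs : M ∈ s := s.max'_mem hsne
      have hMa : M < a := hs M hMs
      have hMP : P < (M:ℝ) := (hmem' M hMs).2
      have hM3 : (3:ℝ) ≤ M := le_trans hP (le_of_lt hMP)
      have hM2 : (2:ℝ) ≤ M := by linarith
      have hMa' : (M:ℝ) ≤ a := by exact_mod_cast le_of_lt hMa
      -- theta bound for s
      have hth_s : ∑ p ∈ s, Real.log p ≤ Real.log 4 * M := by
        apply theta_le M (by linarith) s (fun p hp => (hmem' p hp).1)
        intro p hp
        exact_mod_cast s.le_max' p hp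
      have hth_nonneg : 0 ≤ ∑ p ∈ s, Real.log p := by
        apply Finset.sum_nonneg
        intro p hp
        apply Real.log_nonneg
        have := (hmem' p hp).1.one_lt
        exact_mod_cast le_of_lt this
      have hhM : hfun a ≤ hfun M := hfun_antitone hM2 hMa'
      have hlog4 : 0 ≤ Real.log 4 := Real.log_nonneg (by norm_num)
      -- key step
      have hkey : (∑ p ∈ s, Real.log p) * (hfun M - hfun a)
          ≤ Real.log 4 * ((1/Real.log M + 1/(Real.log M)^2)
              - (1/Real.log a + 1/(Real.log a)^2)) := by
        have h1 : (∑ p ∈ s, Real.log p) * (hfun M - hfun a)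
            ≤ (Real.log 4 * M) * (hfun M - hfun a) := by
          apply mul_le_mul_of_nonneg_right hth_s (by linarith)
        have h2 : (M:ℝ) * (hfun M - hfun a)
            ≤ (1/Real.log M + 1/(Real.log M)^2) - (1/Real.log a + 1/(Real.log a)^2) := by
          have := phi_step hM2 hMa'
          unfold hfun
          convert this using 2
        calc (∑ p ∈ s, Real.log p) * (hfun M - hfun a)
            ≤ (Real.log 4 * M) * (hfun M - hfun a) := h1
          _ = Real.log 4 * ((M:ℝ) * (hfun M - hfun a)) := by ring
          _ ≤ _ := by nlinarith
      rw [hsum, hth, hterm]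
      have hIH' : ∑ p ∈ s, 1/((p:ℝ) * Real.log p)
          ≤ (∑ p ∈ s, Real.log p) * hfun M
            + Real.log 4 * ((1/Real.log P + 1/(Real.log P)^2)
              - (1/Real.log M + 1/(Real.log M)^2)) := IH
      nlinarith [hkey, hIH']

def Ehead : Finset ℕ := {11,13,17,19,23,29,31,37,41,43,47,53,59,61,67,71,73,79,83,89,97,101,103,107,109,113,127}

set_option maxHeartbeats 1000000 in
lemma mem_Ehead {p : ℕ} (hp : p.Prime) (h8 : 8 ≤ p) (h128 : p ≤ 128) : p ∈ Ehead := by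
  have h : p < 129 := by omega
  interval_cases p <;> revert hp <;> decide

set_option maxHeartbeats 1000000 in
lemma Ehead_sum : ∑ p ∈ Ehead, 1/(2*(p:ℝ)) ≤ 0.341 := by
  rw [Ehead]
  rw [show ({11,13,17,19,23,29,31,37,41,43,47,53,59,61,67,71,73,79,83,89,97,101,103,107,109,113,127} : Finset ℕ)
    = Finset.filter (fun p => p ∈ ([11,13,17,19,23,29,31,37,41,43,47,53,59,61,67,71,73,79,83,89,97,101,103,107,109,113,127] : List ℕ)) (Finset.range 129) from by decide]
  norm_num [Finset.sum_filter, Finset.sum_range_succ]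

lemma tail_sum (P : ℝ) (hP : 3 ≤ P) (F : Finset ℕ)
    (hmem : ∀ p ∈ F, p.Prime ∧ P < (p:ℝ)) :
    ∑ p ∈ F, 1/((p:ℝ) * Real.log p) ≤ Real.log 4 * (1/Real.log P + 1/(Real.log P)^2) := by
  have hlogP : (0:ℝ) < Real.log P := Real.log_pos (by linarith)
  have hlog4 : (0:ℝ) ≤ Real.log 4 := Real.log_nonneg (by norm_num)
  rcases F.eq_empty_or_nonempty with rfl | hne
  · simp
    positivity
  · have H := inv_lemma P hP F hmem hne
    set M := F.max' hne with hM
    have hMF : M ∈ F := F.max'_mem hne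
    have hMP : P < (M:ℝ) := (hmem M hMF).2
    have hM0 : (0:ℝ) < M := by linarith
    have hlogM : (0:ℝ) < Real.log M := Real.log_pos (by linarith)
    have hθ : ∑ p ∈ F, Real.log p ≤ Real.log 4 * M := by
      apply theta_le M (by linarith) F (fun p hp => (hmem p hp).1)
      intro p hp
      exact_mod_cast F.le_max' p hp
    have hhM : 0 ≤ hfun (M:ℝ) := by unfold hfun; positivity
    have h1 : (∑ p ∈ F, Real.log p) * hfun M ≤ (Real.log 4 * M) * hfun M :=
      mul_le_mul_of_nonneg_right hθ hhM
    have h2 : (Real.log 4 * M) * hfun M = Real.log 4 * (1/(Real.log M)^2) := by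
      unfold hfun
      field_simp
    have h3 : 0 ≤ Real.log 4 * (1 / Real.log M) := by positivity
    have hexpand : Real.log 4 * ((1/Real.log P + 1/(Real.log P)^2)
            - (1/Real.log M + 1/(Real.log M)^2))
        = Real.log 4 * (1/Real.log P + 1/(Real.log P)^2)
          - Real.log 4 * (1/Real.log M) - Real.log 4 * (1/(Real.log M)^2) := by ring
    calc ∑ p ∈ F, 1/((p:ℝ) * Real.log p) ≤ _ := H
      _ ≤ Real.log 4 * (1/(Real.log M)^2)
          + Real.log 4 * ((1/Real.log P + 1/(Real.log P)^2)
            - (1/Real.log M + 1/(Real.log M)^2)) := by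
          rw [← h2]; linarith
      _ ≤ Real.log 4 * (1/Real.log P + 1/(Real.log P)^2) := by
          rw [hexpand]; linarith

lemma head_sum (F : Finset ℕ) (hmem : ∀ p ∈ F, p.Prime ∧ 8 ≤ p ∧ p ≤ 128) :
    ∑ p ∈ F, 1/((p:ℝ) * Real.log p) ≤ 0.341 := by
  have hlog2 : ∀ p ∈ F, 2 ≤ Real.log p := by
    intro p hp
    obtain ⟨_, h8, _⟩ := hmem p hp
    have : Real.log 8 ≤ Real.log p := Real.log_le_log (by norm_num) (by exact_mod_cast h8)
    have h8e : Real.log 8 = 3 * Real.log 2 := by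
      rw [show (8:ℝ) = 2^3 by norm_num, Real.log_pow]; push_cast; ring
    nlinarith [Real.log_two_gt_d9]
  have h1 : ∀ p ∈ F, 1/((p:ℝ) * Real.log p) ≤ 1/(2*(p:ℝ)) := by
    intro p hp
    obtain ⟨hpp, h8, _⟩ := hmem p hp
    have hp0 : (0:ℝ) < p := by exact_mod_cast (by omega : 0 < p)
    apply one_div_le_one_div_of_le (by positivity)
    nlinarith [hlog2 p hp]
  calc ∑ p ∈ F, 1/((p:ℝ) * Real.log p) ≤ ∑ p ∈ F, 1/(2*(p:ℝ)) := Finset.sum_le_sum h1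
    _ ≤ ∑ p ∈ Ehead, 1/(2*(p:ℝ)) := by
        apply Finset.sum_le_sum_of_subset_of_nonneg
        · intro p hp
          obtain ⟨hpp, h8, h128⟩ := hmem p hp
          exact mem_Ehead hpp h8 h128
        · intro p _ _
          positivity
    _ ≤ 0.341 := Ehead_sum

lemma exp_two_gt_seven : (7:ℝ) < Real.exp 2 := by
  have h := Real.exp_one_gt_d9
  have : Real.exp 2 = Real.exp 1 * Real.exp 1 := by
    rw [← Real.exp_add]; norm_num
  nlinarith

lemma eight_le_of_not_small {p : ℕ} (h : ¬ (p : ℝ) ≤ Real.exp 2) : 8 ≤ p := by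
  have : (7:ℝ) < p := lt_trans exp_two_gt_seven (not_le.1 h)
  exact_mod_cast Nat.lt_iff_add_one_le.1 (by exact_mod_cast this)

lemma prime_part (n : ℕ) (hn : 2 ≤ n) :
    ∑ q ∈ (Finset.Icc 2 n).filter Nat.Prime, weirdG q
      ≤ Real.log 4 * ((n:ℝ)^2 / (Real.log n)^2) := by
  have hlogn : (0:ℝ) < Real.log n := Real.log_pos (by exact_mod_cast hn)
  have hpt : ∀ q ∈ (Finset.Icc 2 n).filter Nat.Prime,
      weirdG q ≤ Real.log q * ((n:ℝ)/(Real.log n)^2) := by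
    intro q hq
    rw [Finset.mem_filter, Finset.mem_Icc] at hq
    obtain ⟨⟨hq2, hqn⟩, hqp⟩ := hq
    rw [weirdG_prime hqp]
    by_cases h : (q:ℝ) ≤ Real.exp 2
    · unfold fP
      rw [if_pos h]
      have : (0:ℝ) ≤ Real.log q := Real.log_nonneg (by exact_mod_cast Nat.one_le_of_lt hq2)
      positivity
    · have h8 : (8:ℕ) ≤ q := eight_le_of_not_small h
      have h8' : (8:ℝ) ≤ q := by exact_mod_cast h8
      have hqn' : (q:ℝ) ≤ n := by exact_mod_cast hqn
      have hlogq : (0:ℝ) < Real.log q := lt_trans two_pos (two_lt_log h)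
      calc fP q ≤ (q:ℝ)/Real.log q := fP_le h
        _ = Real.log q * ((q:ℝ)/(Real.log q)^2) := by field_simp
        _ ≤ Real.log q * ((n:ℝ)/(Real.log n)^2) := by
            apply mul_le_mul_of_nonneg_left (mono1 h8' hqn') (le_of_lt hlogq)
  calc ∑ q ∈ (Finset.Icc 2 n).filter Nat.Prime, weirdG q
      ≤ ∑ q ∈ (Finset.Icc 2 n).filter Nat.Prime, Real.log q * ((n:ℝ)/(Real.log n)^2) :=
        Finset.sum_le_sum hpt
    _ = (∑ q ∈ (Finset.Icc 2 n).filter Nat.Prime, Real.log q) * ((n:ℝ)/(Real.log n)^2) :=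
        (Finset.sum_mul _ _ _).symm
    _ ≤ (Real.log 4 * n) * ((n:ℝ)/(Real.log n)^2) := by
        apply mul_le_mul_of_nonneg_right
        · apply theta_le n (by positivity) _ (fun p hp => (Finset.mem_filter.1 hp).2)
          intro p hp
          have := (Finset.mem_filter.1 hp).1
          rw [Finset.mem_Icc] at this
          exact_mod_cast this.2
        · positivity
    _ = Real.log 4 * ((n:ℝ)^2 / (Real.log n)^2) := by field_simp

lemma composite_rearrange (n : ℕ) :
    ∑ q ∈ (Finset.Icc 2 n).filter (fun q => ¬ q.Prime), weirdG q
      ≤ ∑ p ∈ (Finset.range (n+1)).filter (fun p => p.Prime ∧ p*p ≤ n),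
          fP p * ∑ m ∈ Finset.Icc 1 (n/p), weirdG m := by
  classical
  set Comp := (Finset.Icc 2 n).filter (fun q => ¬ q.Prime) with hComp
  have hmem : ∀ q ∈ Comp, 2 ≤ q ∧ q ≤ n ∧ ¬ q.Prime := by
    intro q hq
    rw [hComp, Finset.mem_filter, Finset.mem_Icc] at hq
    exact ⟨hq.1.1, hq.1.2, hq.2⟩
  have h1 : ∑ q ∈ Comp, weirdG q ≤ ∑ q ∈ Comp, fP q.minFac * weirdG (q / q.minFac) :=
    Finset.sum_le_sum (fun q hq => weirdG_composite_le (hmem q hq).1)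
  have hinj : ∀ q ∈ Comp, ∀ q' ∈ Comp,
      (fun q => (⟨q.minFac, q / q.minFac⟩ : Σ _ : ℕ, ℕ)) q
        = (fun q => (⟨q.minFac, q / q.minFac⟩ : Σ _ : ℕ, ℕ)) q' → q = q' := by
    intro q hq q' hq' he
    simp only [Sigma.mk.inj_iff, heq_eq_eq] at he
    have e1 : q = q.minFac * (q / q.minFac) := (Nat.mul_div_cancel' (Nat.minFac_dvd q)).symm
    have e2 : q' = q'.minFac * (q' / q'.minFac) := (Nat.mul_div_cancel' (Nat.minFac_dvd q')).symm
    rw [e1, he.2, he.1, ← e2]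
  have h2 : ∑ q ∈ Comp, fP q.minFac * weirdG (q / q.minFac)
      = ∑ x ∈ Comp.image (fun q => (⟨q.minFac, q / q.minFac⟩ : Σ _ : ℕ, ℕ)),
          (fun x : Σ _ : ℕ, ℕ => fP x.1 * weirdG x.2) x := by
    rw [Finset.sum_image hinj]
  have hsubset : Comp.image (fun q => (⟨q.minFac, q / q.minFac⟩ : Σ _ : ℕ, ℕ))
      ⊆ ((Finset.range (n+1)).filter (fun p => p.Prime ∧ p*p ≤ n)).sigma
          (fun p => Finset.Icc 1 (n/p)) := by
    intro x hx
    rw [Finset.mem_image] at hx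
    obtain ⟨q, hq, rfl⟩ := hx
    obtain ⟨hq2, hqn, hqnp⟩ := hmem q hq
    have hq1 : q ≠ 1 := by omega
    have hpp : q.minFac.Prime := Nat.minFac_prime hq1
    have hsq : q.minFac * q.minFac ≤ q := by
      have := Nat.minFac_sq_le_self (by omega : 0 < q) hqnp
      nlinarith [this]
    rw [Finset.mem_sigma, Finset.mem_filter, Finset.mem_range, Finset.mem_Icc]
    dsimp only
    refine ⟨⟨?_, hpp, le_trans hsq hqn⟩, ?_, ?_⟩
    · have : q.minFac ≤ q := Nat.minFac_le (by omega)
      omega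
    · have hdvd := Nat.minFac_dvd q
      have : q / q.minFac ≠ 0 := by
        intro h
        have := Nat.div_mul_cancel hdvd
        rw [h, zero_mul] at this
        omega
      exact Nat.one_le_iff_ne_zero.2 this
    · exact Nat.div_le_div_right hqn
  have h3 : ∑ x ∈ Comp.image (fun q => (⟨q.minFac, q / q.minFac⟩ : Σ _ : ℕ, ℕ)),
        (fun x : Σ _ : ℕ, ℕ => fP x.1 * weirdG x.2) x
      ≤ ∑ x ∈ ((Finset.range (n+1)).filter (fun p => p.Prime ∧ p*p ≤ n)).sigma
          (fun p => Finset.Icc 1 (n/p)), (fun x : Σ _ : ℕ, ℕ => fP x.1 * weirdG x.2) x := by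
    apply Finset.sum_le_sum_of_subset_of_nonneg hsubset
    intro x _ _
    exact mul_nonneg (fP_nonneg _) (weirdG_nonneg _)
  have h4 : ∑ x ∈ ((Finset.range (n+1)).filter (fun p => p.Prime ∧ p*p ≤ n)).sigma
          (fun p => Finset.Icc 1 (n/p)), (fun x : Σ _ : ℕ, ℕ => fP x.1 * weirdG x.2) x
      = ∑ p ∈ (Finset.range (n+1)).filter (fun p => p.Prime ∧ p*p ≤ n),
          fP p * ∑ m ∈ Finset.Icc 1 (n/p), weirdG m := by
    rw [Finset.sum_sigma]
    apply Finset.sum_congr rfl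
    intro p _
    rw [Finset.mul_sum]
  calc ∑ q ∈ Comp, weirdG q ≤ _ := h1
    _ = _ := h2
    _ ≤ _ := h3
    _ = _ := h4

lemma log4_bounds : (0:ℝ) ≤ Real.log 4 ∧ Real.log 4 ≤ 1.3862943616 := by
  have e1 : Real.log 4 = 2 * Real.log 2 := by
    rw [show (4:ℝ) = 2^2 by norm_num, Real.log_pow]; push_cast; ring
  constructor
  · rw [e1]; nlinarith [Real.log_two_gt_d9]
  · rw [e1]; nlinarith [Real.log_two_lt_d9]


lemma tail128_num : Real.log 4 * (1/Real.log 128 + 1/(Real.log 128)^2) ≤ 0.345 := by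
  have e1 : Real.log 4 = 2 * Real.log 2 := by
    rw [show (4:ℝ) = 2^2 by norm_num, Real.log_pow]; push_cast; ring
  have e2 : Real.log 128 = 7 * Real.log 2 := by
    rw [show (128:ℝ) = 2^7 by norm_num, Real.log_pow]; push_cast; ring
  have l2a := Real.log_two_gt_d9
  have l2b := Real.log_two_lt_d9
  have h0 : (0:ℝ) < Real.log 2 := by linarith
  have hident : Real.log 4 * (1/Real.log 128 + 1/(Real.log 128)^2)
      = 2/7 + 2/(49 * Real.log 2) := by
    rw [e1, e2]; field_simp; ring
  rw [hident]
  have h1 : 2/(49 * Real.log 2) ≤ 2/(49 * 0.6931471803) := by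
    apply div_le_div_of_nonneg_left (by norm_num) (by norm_num)
    nlinarith
  nlinarith

lemma mid_num {L : ℝ} (hL : 2010 ≤ L) :
    Real.log 4 * (1/(L/12) + 1/(L/12)^2) ≤ 0.00833 := by
  have hL0 : (0:ℝ) < L := by linarith
  have h1 : 1/(L/12) ≤ 12/2010 := by
    rw [one_div_div]
    apply div_le_div_of_nonneg_left (by norm_num) (by norm_num)
    linarith
  have h2 : 1/(L/12)^2 ≤ 144/2010^2 := by
    have : (L/12)^2 ≥ (2010/12)^2 := by
      apply pow_le_pow_left₀ (by norm_num) (by linarith)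
    calc 1/(L/12)^2 ≤ 1/((2010:ℝ)/12)^2 := by
          apply div_le_div_of_nonneg_left (by norm_num) (by norm_num) this
      _ = 144/2010^2 := by norm_num
  obtain ⟨h4a, h4b⟩ := log4_bounds
  have hs : 1/(L/12) + 1/(L/12)^2 ≤ 12/2010 + 144/2010^2 := by linarith
  have hs0 : (0:ℝ) ≤ 1/(L/12) + 1/(L/12)^2 := by positivity
  calc Real.log 4 * (1/(L/12) + 1/(L/12)^2)
      ≤ 1.3862943616 * (12/2010 + 144/2010^2) := by
        apply mul_le_mul h4b hs hs0 (by norm_num)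
    _ ≤ 0.00833 := by norm_num

lemma Icc_split (n : ℕ) (hn : 2 ≤ n) :
    ∑ q ∈ Finset.Icc 1 n, weirdG q
      = 1 + (∑ q ∈ (Finset.Icc 2 n).filter Nat.Prime, weirdG q
          + ∑ q ∈ (Finset.Icc 2 n).filter (fun q => ¬ q.Prime), weirdG q) := by
  classical
  have h1 : Finset.Icc 1 n = insert 1 (Finset.Icc 2 n) := by
    ext q
    simp only [Finset.mem_insert, Finset.mem_Icc]
    omega
  rw [h1, Finset.sum_insert (by simp), weirdG_one,
    Finset.sum_filter_add_sum_filter_not]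

set_option maxHeartbeats 1000000 in
lemma key : ∀ n : ℕ, 2^1450 ≤ n →
    ∑ q ∈ Finset.Icc 1 n, weirdG q ≤ 5000000 * ((n:ℝ)^2 / (Real.log n)^2) := by
  intro n
  induction n using Nat.strong_induction_on with
  | _ n ih =>
  intro hn
  have hn2 : 2 ≤ n := le_trans (Nat.le_self_pow (by norm_num) 2) hn
  have hnR : ((2:ℝ))^(1450:ℕ) ≤ (n:ℝ) := by exact_mod_cast hn
  have hn0 : (0:ℝ) < n := by positivity
  have hlogn1005 : (1005:ℝ) ≤ Real.log n := by
    have h1 : Real.log ((2:ℝ)^(1450:ℕ)) ≤ Real.log n :=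
      Real.log_le_log (by positivity) hnR
    rw [Real.log_pow] at h1
    push_cast at h1
    have h2 := Real.log_two_gt_d9
    linarith
  have hlogn0 : (0:ℝ) < Real.log n := by linarith
  set L := Real.log n with hLdef
  rw [Icc_split n hn2]
  by_cases hbase : n ≤ 2^2900
  · -- base case
    have hub : L ≤ 2010.2 := by
      have h1 : Real.log n ≤ Real.log ((2:ℝ)^(2900:ℕ)) := by
        apply Real.log_le_log hn0
        exact_mod_cast hbase
      rw [Real.log_pow] at h1
      push_cast at h1
      have h2 := Real.log_two_lt_d9
      linarith
    have hhalf : ∀ q ∈ Finset.Icc 2 n, weirdG q ≤ (n:ℝ)/2 := by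
      intro q hq
      rw [Finset.mem_Icc] at hq
      refine (weirdG_le_half hq.1).trans ?_
      have : (q:ℝ) ≤ n := by exact_mod_cast hq.2
      linarith
    have hsum2 : ∑ q ∈ Finset.Icc 2 n, weirdG q ≤ (n:ℝ) * ((n:ℝ)/2) := by
      calc ∑ q ∈ Finset.Icc 2 n, weirdG q
          ≤ (Finset.Icc 2 n).card • ((n:ℝ)/2) := Finset.sum_le_card_nsmul _ _ _ hhalf
        _ = ((Finset.Icc 2 n).card : ℝ) * ((n:ℝ)/2) := by rw [nsmul_eq_mul]
        _ ≤ (n:ℝ) * ((n:ℝ)/2) := by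
            apply mul_le_mul_of_nonneg_right _ (by positivity)
            rw [Nat.card_Icc]
            have : (n + 1 - 2 : ℕ) ≤ n := by omega
            exact_mod_cast this
    have hsplit := (Finset.sum_filter_add_sum_filter_not (Finset.Icc 2 n) Nat.Prime weirdG)
    have hL2 : L^2 ≤ 4040905 := by
      have h1 : L^2 ≤ 2010.2^2 := by
        apply pow_le_pow_left₀ (by linarith) hub
      have h2 : (2010.2:ℝ)^2 ≤ 4040905 := by norm_num
      linarith
    have hfrac : (n:ℝ)^2/4040905 ≤ (n:ℝ)^2/L^2 := by
      apply div_le_div_of_nonneg_left (by positivity) (by positivity)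
      linarith
    have hn4 : (4:ℝ) ≤ (n:ℝ)^2 := by
      have h2n : (2:ℝ) ≤ n := by exact_mod_cast hn2
      calc (4:ℝ) = 2^2 := by norm_num
        _ ≤ (n:ℝ)^2 := by apply pow_le_pow_left₀ (by norm_num) h2n
    rw [hsplit]
    linarith [hfrac, hsum2]
  · -- inductive step
    push_neg at hbase
    have hL2010 : (2010:ℝ) ≤ L := by
      have h2900 : ((2:ℝ))^(2900:ℕ) ≤ n := by exact_mod_cast le_of_lt hbase
      have h1 : Real.log ((2:ℝ)^(2900:ℕ)) ≤ Real.log n :=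
        Real.log_le_log (by positivity) h2900
      rw [Real.log_pow] at h1
      push_cast at h1
      have h2 := Real.log_two_gt_d9
      linarith
    set C : ℝ := 5000000 with hC
    set Pset := (Finset.range (n+1)).filter (fun p => p.Prime ∧ p*p ≤ n) with hPset
    -- termwise bound
    have hterm : ∀ p ∈ Pset, fP p * ∑ m ∈ Finset.Icc 1 (n/p), weirdG m
        ≤ (if (p:ℝ) ≤ Real.exp 2 then 0 else 1/((p:ℝ)*Real.log p))
            * (C * (n:ℝ)^2 / (Real.log ((n:ℝ)/p))^2) := by
      intro p hp
      rw [hPset, Finset.mem_filter] at hp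
      obtain ⟨_, hpp, hppn⟩ := hp
      have hp2 : 2 ≤ p := hpp.two_le
      have hp0 : (0:ℝ) < p := by exact_mod_cast hpp.pos
      by_cases hsmall : (p:ℝ) ≤ Real.exp 2
      · unfold fP
        rw [if_pos hsmall, if_pos hsmall, zero_mul, zero_mul]
      · rw [if_neg hsmall]
        -- facts about m = n/p
        set m := n / p with hm
        have hmlt : m < n := Nat.div_lt_self (by omega) (by omega)
        have hmge : 2^1450 ≤ m := by
          rw [hm]
          rw [Nat.le_div_iff_mul_le (by omega : 0 < p)]
          by_cases hple : p ≤ 2^1450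
          · calc 2^1450 * p ≤ 2^1450 * 2^1450 := by exact Nat.mul_le_mul_left _ hple
              _ = 2^2900 := by rw [← pow_add]
              _ ≤ n := le_of_lt hbase
          · push_neg at hple
            calc 2^1450 * p ≤ p * p := Nat.mul_le_mul_right _ (le_of_lt hple)
              _ ≤ n := hppn
        have hIH := ih m hmlt hmge
        have hm8 : (8:ℝ) ≤ (m:ℝ) := by
          have : (8:ℕ) ≤ m := le_trans (le_of_eq (by norm_num : (8:ℕ) = 2^3)) (le_trans (Nat.pow_le_pow_right (by norm_num) (by norm_num)) hmge)
          exact_mod_cast this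
        have hcast : (m:ℝ) ≤ (n:ℝ)/p := Nat.cast_div_le
        have hnp8 : (8:ℝ) ≤ (n:ℝ)/p := le_trans hm8 hcast
        have hmono := mono2 hm8 hcast
        have hS : ∑ q ∈ Finset.Icc 1 m, weirdG q ≤ C * (((n:ℝ)/p)^2 / (Real.log ((n:ℝ)/p))^2) := by
          calc ∑ q ∈ Finset.Icc 1 m, weirdG q ≤ C * ((m:ℝ)^2/(Real.log m)^2) := hIH
            _ ≤ C * (((n:ℝ)/p)^2 / (Real.log ((n:ℝ)/p))^2) := by
                apply mul_le_mul_of_nonneg_left hmono (by norm_num [hC])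
        have hfPle := fP_le hsmall
        have hlogp : (0:ℝ) < Real.log p := lt_trans two_pos (two_lt_log hsmall)
        have hlognp : (0:ℝ) < Real.log ((n:ℝ)/p) := Real.log_pos (by linarith)
        have hSnn : (0:ℝ) ≤ ∑ q ∈ Finset.Icc 1 m, weirdG q :=
          Finset.sum_nonneg (fun q _ => weirdG_nonneg q)
        calc fP p * ∑ q ∈ Finset.Icc 1 m, weirdG q
            ≤ ((p:ℝ)/Real.log p) * (C * (((n:ℝ)/p)^2 / (Real.log ((n:ℝ)/p))^2)) := by
              apply mul_le_mul hfPle hS hSnn (by positivity)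
          _ = 1/((p:ℝ)*Real.log p) * (C * (n:ℝ)^2 / (Real.log ((n:ℝ)/p))^2) := by
              field_simp
    classical
    have hprime := prime_part n hn2
    rw [← hLdef] at hprime
    have hcomp := composite_rearrange n
    set rhs := fun p : ℕ => (if (p:ℝ) ≤ Real.exp 2 then 0 else 1/((p:ℝ)*Real.log p))
            * (C * (n:ℝ)^2 / (Real.log ((n:ℝ)/p))^2) with hrhs
    have hsum_le : ∑ p ∈ Pset, fP p * ∑ m ∈ Finset.Icc 1 (n/p), weirdG m
        ≤ ∑ p ∈ Pset, rhs p := Finset.sum_le_sum hterm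
    have hL2pos : (0:ℝ) < L^2 := pow_pos hlogn0 2
    have hCpos : (0:ℝ) < C := by rw [hC]; norm_num
    have hXpos : (0:ℝ) < C * (n:ℝ)^2 / L^2 :=
      div_pos (mul_pos hCpos (pow_pos hn0 2)) hL2pos
    -- Region I
    have hI : ∑ p ∈ Pset.filter (fun p => p^12 ≤ n), rhs p
        ≤ 0.686 * ((144/121) * (C * (n:ℝ)^2 / L^2)) := by
      have hpt : ∀ p ∈ Pset.filter (fun p => p^12 ≤ n),
          rhs p ≤ (if (p:ℝ) ≤ Real.exp 2 then 0 else 1/((p:ℝ)*Real.log p))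
              * ((144/121) * (C * (n:ℝ)^2 / L^2)) := by
        intro p hp
        rw [Finset.mem_filter] at hp
        obtain ⟨hpPset, hp12⟩ := hp
        rw [hPset, Finset.mem_filter] at hpPset
        obtain ⟨-, hpp, hppn⟩ := hpPset
        have hp0 : (0:ℝ) < p := by exact_mod_cast hpp.pos
        by_cases hsmall : (p:ℝ) ≤ Real.exp 2
        · rw [hrhs]
          simp only [if_pos hsmall, zero_mul]
          exact le_refl 0
        · have hlogp0 : (0:ℝ) ≤ Real.log p :=
            Real.log_nonneg (by exact_mod_cast hpp.one_lt.le)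
          have h12 : 12 * Real.log p ≤ L := by
            have hcast : ((p:ℝ))^(12:ℕ) ≤ (n:ℝ) := by exact_mod_cast hp12
            have h := Real.log_le_log (by positivity) hcast
            rw [Real.log_pow] at h
            push_cast at h
            linarith
          have hlognp : Real.log ((n:ℝ)/p) = L - Real.log p :=
            Real.log_div (ne_of_gt hn0) (ne_of_gt hp0)
          have hlb : (11/12) * L ≤ Real.log ((n:ℝ)/p) := by rw [hlognp]; linarith
          have h0' : (0:ℝ) ≤ (11/12)*L := by linarith
          have hsq : (121/144) * L^2 ≤ (Real.log ((n:ℝ)/p))^2 := by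
            have h1 := pow_le_pow_left₀ h0' hlb 2
            have h2 : ((11/12)*L)^2 = (121/144)*L^2 := by ring
            linarith
          have hmain : C * (n:ℝ)^2 / (Real.log ((n:ℝ)/p))^2
              ≤ (144/121)*(C*(n:ℝ)^2/L^2) := by
            have hpos : (0:ℝ) < (121/144)*L^2 := by linarith
            have hCn : (0:ℝ) ≤ C * (n:ℝ)^2 := le_of_lt (mul_pos hCpos (pow_pos hn0 2))
            calc C * (n:ℝ)^2 / (Real.log ((n:ℝ)/p))^2
                ≤ C * (n:ℝ)^2 / ((121/144)*L^2) :=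
                  div_le_div_of_nonneg_left hCn hpos hsq
              _ = (144/121)*(C*(n:ℝ)^2/L^2) := by
                  field_simp
          rw [hrhs]
          simp only [if_neg hsmall]
          apply mul_le_mul_of_nonneg_left hmain
          have hlogp2 : (2:ℝ) < Real.log p := two_lt_log hsmall
          have hpl : (0:ℝ) < (p:ℝ) * Real.log p := mul_pos hp0 (lt_trans two_pos hlogp2)
          exact le_of_lt (one_div_pos.mpr hpl)
      have hinner : (∑ p ∈ Pset.filter (fun p => p^12 ≤ n),
          (if (p:ℝ) ≤ Real.exp 2 then 0 else 1/((p:ℝ)*Real.log p))) ≤ 0.686 := by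
        have hconv : ∑ p ∈ Pset.filter (fun p => p^12 ≤ n),
            (if (p:ℝ) ≤ Real.exp 2 then 0 else 1/((p:ℝ)*Real.log p))
            = ∑ p ∈ (Pset.filter (fun p => p^12 ≤ n)).filter
                (fun p : ℕ => ¬ ((p:ℝ) ≤ Real.exp 2)), 1/((p:ℝ)*Real.log p) := by
          rw [eq_comm, Finset.sum_filter]
          apply Finset.sum_congr rfl
          intro p _
          by_cases h : (p:ℝ) ≤ Real.exp 2 <;> simp [h]
        rw [hconv]
        set F1 := (Pset.filter (fun p => p^12 ≤ n)).filter
            (fun p : ℕ => ¬ ((p:ℝ) ≤ Real.exp 2)) with hF1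
        have hF1mem : ∀ p ∈ F1, p.Prime ∧ 8 ≤ p ∧ ¬ ((p:ℝ) ≤ Real.exp 2) := by
          intro p hp
          rw [hF1, Finset.mem_filter, Finset.mem_filter] at hp
          obtain ⟨⟨hp1, -⟩, hp3⟩ := hp
          rw [hPset, Finset.mem_filter] at hp1
          exact ⟨hp1.2.1, eight_le_of_not_small hp3, hp3⟩
        rw [← Finset.sum_filter_add_sum_filter_not F1 (fun p => p ≤ 128)
          (fun p => 1/((p:ℝ)*Real.log p))]
        have hhead : ∑ p ∈ F1.filter (fun p => p ≤ 128), 1/((p:ℝ)*Real.log p) ≤ 0.341 := by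
          apply head_sum
          intro p hp
          rw [Finset.mem_filter] at hp
          obtain ⟨hp1, hp2⟩ := hp
          obtain ⟨ha, hb, -⟩ := hF1mem p hp1
          exact ⟨ha, hb, hp2⟩
        have htail : ∑ p ∈ F1.filter (fun p => ¬ p ≤ 128), 1/((p:ℝ)*Real.log p)
            ≤ Real.log 4 * (1/Real.log 128 + 1/(Real.log 128)^2) := by
          apply tail_sum 128 (by norm_num)
          intro p hp
          rw [Finset.mem_filter] at hp
          obtain ⟨hp1, hp2⟩ := hp
          obtain ⟨ha, -, -⟩ := hF1mem p hp1
          refine ⟨ha, ?_⟩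
          push_neg at hp2
          exact_mod_cast hp2
        have h128 := tail128_num
        linarith
      calc ∑ p ∈ Pset.filter (fun p => p^12 ≤ n), rhs p
          ≤ ∑ p ∈ Pset.filter (fun p => p^12 ≤ n),
              (if (p:ℝ) ≤ Real.exp 2 then 0 else 1/((p:ℝ)*Real.log p))
                * ((144/121) * (C * (n:ℝ)^2 / L^2)) := Finset.sum_le_sum hpt
        _ = (∑ p ∈ Pset.filter (fun p => p^12 ≤ n),
              (if (p:ℝ) ≤ Real.exp 2 then 0 else 1/((p:ℝ)*Real.log p)))
                * ((144/121) * (C * (n:ℝ)^2 / L^2)) := (Finset.sum_mul _ _ _).symm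
        _ ≤ 0.686 * ((144/121) * (C * (n:ℝ)^2 / L^2)) := by
            apply mul_le_mul_of_nonneg_right hinner
            linarith [hXpos]
    -- Region II
    have hII : ∑ p ∈ Pset.filter (fun p => ¬ p^12 ≤ n), rhs p
        ≤ 0.00833 * (4 * (C * (n:ℝ)^2 / L^2)) := by
      have hpt : ∀ p ∈ Pset.filter (fun p => ¬ p^12 ≤ n),
          rhs p ≤ (if (p:ℝ) ≤ Real.exp 2 then 0 else 1/((p:ℝ)*Real.log p))
              * (4 * (C * (n:ℝ)^2 / L^2)) := by
        intro p hp
        rw [Finset.mem_filter] at hp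
        obtain ⟨hpPset, -⟩ := hp
        rw [hPset, Finset.mem_filter] at hpPset
        obtain ⟨-, hpp, hppn⟩ := hpPset
        have hp0 : (0:ℝ) < p := by exact_mod_cast hpp.pos
        by_cases hsmall : (p:ℝ) ≤ Real.exp 2
        · rw [hrhs]
          simp only [if_pos hsmall, zero_mul]
          exact le_refl 0
        · have hlogp0 : (0:ℝ) ≤ Real.log p :=
            Real.log_nonneg (by exact_mod_cast hpp.one_lt.le)
          have h2' : 2 * Real.log p ≤ L := by
            have hcast : ((p:ℝ)) * p ≤ (n:ℝ) := by exact_mod_cast hppn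
            have h := Real.log_le_log (by positivity) hcast
            rw [Real.log_mul (ne_of_gt hp0) (ne_of_gt hp0)] at h
            linarith
          have hlognp : Real.log ((n:ℝ)/p) = L - Real.log p :=
            Real.log_div (ne_of_gt hn0) (ne_of_gt hp0)
          have hlb : (1/2) * L ≤ Real.log ((n:ℝ)/p) := by rw [hlognp]; linarith
          have h0' : (0:ℝ) ≤ (1/2)*L := by linarith
          have hsq : (1/4) * L^2 ≤ (Real.log ((n:ℝ)/p))^2 := by
            have h1 := pow_le_pow_left₀ h0' hlb 2
            have h2 : ((1/2)*L)^2 = (1/4)*L^2 := by ring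
            linarith
          have hmain : C * (n:ℝ)^2 / (Real.log ((n:ℝ)/p))^2
              ≤ 4*(C*(n:ℝ)^2/L^2) := by
            have hpos : (0:ℝ) < (1/4)*L^2 := by linarith
            have hCn : (0:ℝ) ≤ C * (n:ℝ)^2 := le_of_lt (mul_pos hCpos (pow_pos hn0 2))
            calc C * (n:ℝ)^2 / (Real.log ((n:ℝ)/p))^2
                ≤ C * (n:ℝ)^2 / ((1/4)*L^2) :=
                  div_le_div_of_nonneg_left hCn hpos hsq
              _ = 4*(C*(n:ℝ)^2/L^2) := by
                  field_simp
          rw [hrhs]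
          simp only [if_neg hsmall]
          apply mul_le_mul_of_nonneg_left hmain
          have hlogp2 : (2:ℝ) < Real.log p := two_lt_log hsmall
          have hpl : (0:ℝ) < (p:ℝ) * Real.log p := mul_pos hp0 (lt_trans two_pos hlogp2)
          exact le_of_lt (one_div_pos.mpr hpl)
      have hinner : (∑ p ∈ Pset.filter (fun p => ¬ p^12 ≤ n),
          (if (p:ℝ) ≤ Real.exp 2 then 0 else 1/((p:ℝ)*Real.log p))) ≤ 0.00833 := by
        have hconv : ∑ p ∈ Pset.filter (fun p => ¬ p^12 ≤ n),
            (if (p:ℝ) ≤ Real.exp 2 then 0 else 1/((p:ℝ)*Real.log p))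
            = ∑ p ∈ (Pset.filter (fun p => ¬ p^12 ≤ n)).filter
                (fun p : ℕ => ¬ ((p:ℝ) ≤ Real.exp 2)), 1/((p:ℝ)*Real.log p) := by
          rw [eq_comm, Finset.sum_filter]
          apply Finset.sum_congr rfl
          intro p _
          by_cases h : (p:ℝ) ≤ Real.exp 2 <;> simp [h]
        rw [hconv]
        have hP3 : (3:ℝ) ≤ Real.exp (L/12) := by
          have h1 : (2:ℝ) ≤ L/12 := by linarith
          have h2 : Real.exp 2 ≤ Real.exp (L/12) := Real.exp_le_exp.2 h1
          linarith [exp_two_gt_seven]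
        have htail := tail_sum (Real.exp (L/12)) hP3
          ((Pset.filter (fun p => ¬ p^12 ≤ n)).filter
            (fun p : ℕ => ¬ ((p:ℝ) ≤ Real.exp 2))) ?_
        · rw [Real.log_exp] at htail
          have := mid_num hL2010
          linarith
        · intro p hp
          rw [Finset.mem_filter, Finset.mem_filter] at hp
          obtain ⟨⟨hp1, hp2⟩, -⟩ := hp
          rw [hPset, Finset.mem_filter] at hp1
          obtain ⟨-, hpp, -⟩ := hp1
          have hp0 : (0:ℝ) < p := by exact_mod_cast hpp.pos
          refine ⟨hpp, ?_⟩
          push_neg at hp2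
          have hcast : (n:ℝ) < ((p:ℝ))^(12:ℕ) := by exact_mod_cast hp2
          have hlt : L < 12 * Real.log p := by
            have h := Real.log_lt_log hn0 hcast
            rw [Real.log_pow] at h
            push_cast at h
            linarith
          calc Real.exp (L/12) < Real.exp (Real.log p) :=
                Real.exp_lt_exp.2 (by linarith)
            _ = p := Real.exp_log hp0
      calc ∑ p ∈ Pset.filter (fun p => ¬ p^12 ≤ n), rhs p
          ≤ ∑ p ∈ Pset.filter (fun p => ¬ p^12 ≤ n),
              (if (p:ℝ) ≤ Real.exp 2 then 0 else 1/((p:ℝ)*Real.log p))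
                * (4 * (C * (n:ℝ)^2 / L^2)) := Finset.sum_le_sum hpt
        _ = (∑ p ∈ Pset.filter (fun p => ¬ p^12 ≤ n),
              (if (p:ℝ) ≤ Real.exp 2 then 0 else 1/((p:ℝ)*Real.log p)))
                * (4 * (C * (n:ℝ)^2 / L^2)) := (Finset.sum_mul _ _ _).symm
        _ ≤ 0.00833 * (4 * (C * (n:ℝ)^2 / L^2)) := by
            apply mul_le_mul_of_nonneg_right hinner
            linarith [hXpos]
    have hcomb : ∑ p ∈ Pset, rhs p
        ≤ 0.686*((144/121)*(C*(n:ℝ)^2/L^2)) + 0.00833*(4*(C*(n:ℝ)^2/L^2)) := by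
      rw [← Finset.sum_filter_add_sum_filter_not Pset (fun p => p^12 ≤ n) rhs]
      exact add_le_add hI hII
    have hX1 : 1 ≤ (n:ℝ)^2 / L^2 := by
      have hLn : L ≤ (n:ℝ) := by
        have h := Real.log_le_sub_one_of_pos hn0
        rw [← hLdef] at h
        linarith
      rw [le_div_iff₀ hL2pos]
      have := pow_le_pow_left₀ (le_of_lt hlogn0) hLn 2
      linarith
    have hfinal : ∑ q ∈ (Finset.Icc 2 n).filter (fun q => ¬ q.Prime), weirdG q
        ≤ 0.8498 * (C * ((n:ℝ)^2/L^2)) := by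
      have h1 := hcomp.trans (hsum_le.trans hcomb)
      have heq : 0.686*((144/121)*(C*(n:ℝ)^2/L^2)) + 0.00833*(4*(C*(n:ℝ)^2/L^2))
          ≤ 0.8498 * (C * ((n:ℝ)^2/L^2)) := by
        have hCX : (0:ℝ) ≤ C * ((n:ℝ)^2/L^2) := by
          have h' : C * ((n:ℝ)^2/L^2) = C * (n:ℝ)^2/L^2 := by ring
          rw [h']
          exact le_of_lt hXpos
        ring_nf
        ring_nf at hCX
        linarith [hCX]
      calc ∑ q ∈ (Finset.Icc 2 n).filter (fun q => ¬ q.Prime), weirdG q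
          ≤ _ := h1
        _ ≤ _ := heq
    have hfin2 : 1 + (1.3862943616) * ((n:ℝ)^2/L^2) + 0.8498 * (C * ((n:ℝ)^2/L^2))
        ≤ C * ((n:ℝ)^2/L^2) := by
      rw [hC]
      linarith [hX1]
    obtain ⟨h4a, h4b⟩ := log4_bounds
    have hprime' : ∑ q ∈ (Finset.Icc 2 n).filter Nat.Prime, weirdG q
        ≤ 1.3862943616 * ((n:ℝ)^2/L^2) := by
      calc ∑ q ∈ (Finset.Icc 2 n).filter Nat.Prime, weirdG q
          ≤ Real.log 4 * ((n:ℝ)^2/L^2) := hprime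
        _ ≤ 1.3862943616 * ((n:ℝ)^2/L^2) := by
            apply mul_le_mul_of_nonneg_right h4b
            positivity
    have hgoal : C * ((n:ℝ)^2/L^2) = 5000000 * ((n:ℝ)^2/L^2) := by rw [hC]
    linarith [hprime', hfinal, hfin2]

theorem sum_weirdG_bigO :
    ∃ C : ℝ, 0 < C ∧ ∃ x₀ : ℕ, 2 ≤ x₀ ∧ ∀ x : ℕ, x₀ ≤ x →
      ∑ q ∈ Finset.Icc 1 x, weirdG q ≤ C * ((x : ℝ) ^ 2 / (Real.log x) ^ 2) := by
  refine ⟨5000000, by norm_num, 2^1450, ?_, fun x hx => key x hx⟩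
  exact Nat.le_self_pow (by norm_num) 2
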